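/- Kitatani-type upper bound (Eq. (12)): Let B ⊆ V with λ_B > 0 and suppose the distribution P_B is symmetric. Then E[ J_B ⟨σ_B⟩_J ] ≤ E[ J_B tanh(β λ_B J_B) ]. -/

import Mathlib

open MeasureTheory Real

variable {V : Type*}

/-- Spin value of a configuration at a site: `+1` or `-1`. -/
noncomputable def spin (σ : V → Bool) (i : V) : ℝ := if σ i then 1 else -1

/-- `σ_A = ∏_{i ∈ A} σ_i`. -/
noncomputable def sigmaA (A : Finset V) (σ : V → Bool) : ℝ := ∏ i ∈ A, spin σ i

/-- `β Σ_A λ_A J_A σ_A` (minus the Hamiltonian, times β). -/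
noncomputable def energy [Fintype V] [DecidableEq V] (β : ℝ) (lam J : Finset V → ℝ)
    (σ : V → Bool) : ℝ := β * ∑ A : Finset V, lam A * J A * sigmaA A σ

/-- Partition function `Z_J`. -/
noncomputable def Zfun [Fintype V] [DecidableEq V] (β : ℝ) (lam J : Finset V → ℝ) : ℝ :=
  ∑ σ : V → Bool, Real.exp (energy β lam J σ)

/-- Gibbs expectation `⟨σ_B⟩_J`. -/
noncomputable def corr [Fintype V] [DecidableEq V] (β : ℝ) (lam J : Finset V → ℝ)
    (B : Finset V) : ℝ :=
  (∑ σ : V → Bool, sigmaA B σ * Real.exp (energy β lam J σ)) / Zfun β lam J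

/-- Gibbs expectation `⟨σ_B σ_C⟩_J`. -/
noncomputable def corr2 [Fintype V] [DecidableEq V] (β : ℝ) (lam J : Finset V → ℝ)
    (B C : Finset V) : ℝ :=
  (∑ σ : V → Bool, sigmaA B σ * sigmaA C σ * Real.exp (energy β lam J σ)) / Zfun β lam J

/-- Negate the coupling indexed by `B`. -/
noncomputable def flipJ [DecidableEq V] (B : Finset V) (J : Finset V → ℝ) : Finset V → ℝ :=
  Function.update J B (-(J B))

/-- The density-ratio condition `P(-x) = exp(-2 b x) P(x)`: the pushforward of `P` under
negation equals the measure with density `x ↦ exp (-2 b x)` with respect to `P`. -/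
def densityRatio (P : Measure ℝ) (b : ℝ) : Prop :=
  P.map (fun x => -x) = P.withDensity (fun x => ENNReal.ofReal (Real.exp (-2 * b * x)))

section Aux
variable [Fintype V] [DecidableEq V]

lemma sigmaA_pm (B : Finset V) (σ : V → Bool) : sigmaA B σ = 1 ∨ sigmaA B σ = -1 := by
  rw [← mul_self_eq_one_iff]
  unfold sigmaA
  rw [← Finset.prod_mul_distrib]
  refine Finset.prod_eq_one fun i _ => ?_
  unfold spin; by_cases h : σ i <;> simp [h]

lemma energy_decomp (β : ℝ) (lam J : Finset V → ℝ) (B : Finset V) (σ : V → Bool) :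
    energy β lam J σ =
      β * lam B * J B * sigmaA B σ + energy β lam (Function.update J B 0) σ := by
  unfold energy
  have h : ∀ A : Finset V, lam A * J A * sigmaA A σ =
      (if A = B then lam B * J B * sigmaA B σ else 0) +
        lam A * (Function.update J B 0) A * sigmaA A σ := by
    intro A
    rcases eq_or_ne A B with h | h
    · subst h; simp [Function.update_self]
    · simp [h, Function.update_of_ne h]
  rw [Finset.sum_congr rfl fun A _ => h A, Finset.sum_add_distrib]
  simp [Finset.sum_ite_eq']
  ring

lemma exp_pm (t x : ℝ) (hx : x = 1 ∨ x = -1) :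
    Real.exp (t * x) = Real.cosh t + x * Real.sinh t := by
  rcases hx with h | h <;> subst h
  · simp [Real.cosh_add_sinh]
  · rw [mul_neg_one, ← Real.cosh_sub_sinh]; ring

lemma alg_ineq (a c s S0 S1 : ℝ) (hc : 0 < c) (hsq : c ^ 2 = s ^ 2 + 1)
    (hd1 : 0 < c * S0 + s * S1) (hd2 : 0 < c * S0 - s * S1) (hts : 0 ≤ a * s) :
    a * ((c * S1 + s * S0) / (c * S0 + s * S1)) - a * (s / c) +
      (-a * ((c * S1 - s * S0) / (c * S0 - s * S1)) - -a * -(s / c)) ≤ 0 := by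
  have heq : a * ((c * S1 + s * S0) / (c * S0 + s * S1)) - a * (s / c) +
      (-a * ((c * S1 - s * S0) / (c * S0 - s * S1)) - -a * -(s / c)) =
      -(2 * (a * s) * S1 ^ 2 * (c ^ 2 - s ^ 2)) /
        (c * ((c * S0 + s * S1) * (c * S0 - s * S1))) := by
    have h1 := hc.ne'; have h2 := hd1.ne'; have h3 := hd2.ne'
    rw [eq_div_iff (by positivity)]
    have hx := mul_inv_cancel₀ h2
    have hy := mul_inv_cancel₀ h3
    have hz := mul_inv_cancel₀ h1
    simp only [div_eq_mul_inv]
    linear_combination (a*(c*S1+s*S0)*c*(c * S0 - s * S1)) * hx - (2*a*s*(c * S0 + s * S1)*(c * S0 - s * S1)) * hz - (a*(c*S1-s*S0)*c*(c * S0 + s * S1)) * hy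
  rw [heq]
  apply div_nonpos_of_nonpos_of_nonneg
  · have h1 : c ^ 2 - s ^ 2 = 1 := by linarith
    rw [h1]
    nlinarith [mul_nonneg hts (sq_nonneg S1)]
  · positivity

lemma key_pointwise (β : ℝ) (hβ : 0 < β) (lam : Finset V → ℝ) (B : Finset V)
    (hlamB : 0 < lam B) (J : Finset V → ℝ) :
    (J B * corr β lam J B - J B * Real.tanh (β * lam B * J B)) +
      ((flipJ B J) B * corr β lam (flipJ B J) B -
        (flipJ B J) B * Real.tanh (β * lam B * (flipJ B J) B)) ≤ 0 := by
  set t := β * lam B * J B with ht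
  set J0 := Function.update J B 0 with hJ0
  set S0 := ∑ σ : V → Bool, Real.exp (energy β lam J0 σ) with hS0
  set S1 := ∑ σ : V → Bool, sigmaA B σ * Real.exp (energy β lam J0 σ) with hS1
  have hflipB : flipJ B J B = -(J B) := by simp [flipJ]
  have hflip0 : Function.update (flipJ B J) B 0 = J0 := by
    simp [flipJ, hJ0, Function.update_idem]
  have hS0pos : 0 < S0 := Finset.sum_pos (fun σ _ => Real.exp_pos _) Finset.univ_nonempty
  have hS1le : -S0 ≤ S1 ∧ S1 ≤ S0 := by
    constructor
    · rw [hS1, hS0, ← Finset.sum_neg_distrib]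
      refine Finset.sum_le_sum fun σ _ => ?_
      rcases sigmaA_pm B σ with h | h <;> rw [h] <;> nlinarith [Real.exp_pos (energy β lam J0 σ)]
    · refine Finset.sum_le_sum fun σ _ => ?_
      rcases sigmaA_pm B σ with h | h <;> rw [h] <;> nlinarith [Real.exp_pos (energy β lam J0 σ)]
  have hcpos : 0 < Real.cosh t := Real.cosh_pos t
  have hsq : Real.cosh t ^ 2 = Real.sinh t ^ 2 + 1 := Real.cosh_sq t
  have habs : |Real.sinh t| < Real.cosh t := by
    rw [abs_lt]; constructor <;> nlinarith
  have habs' := abs_lt.1 habs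
  have hZ : Zfun β lam J = Real.cosh t * S0 + Real.sinh t * S1 := by
    unfold Zfun
    rw [hS0, hS1, Finset.mul_sum, Finset.mul_sum, ← Finset.sum_add_distrib]
    refine Finset.sum_congr rfl fun σ _ => ?_
    rw [energy_decomp β lam J B σ, ← hJ0, ← ht, Real.exp_add,
      exp_pm t (sigmaA B σ) (sigmaA_pm B σ)]
    ring
  have hN : (∑ σ : V → Bool, sigmaA B σ * Real.exp (energy β lam J σ))
      = Real.cosh t * S1 + Real.sinh t * S0 := by
    rw [hS0, hS1, Finset.mul_sum, Finset.mul_sum, ← Finset.sum_add_distrib]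
    refine Finset.sum_congr rfl fun σ _ => ?_
    rw [energy_decomp β lam J B σ, ← hJ0, ← ht, Real.exp_add,
      exp_pm t (sigmaA B σ) (sigmaA_pm B σ)]
    rcases sigmaA_pm B σ with h | h <;> rw [h] <;> ring
  have hZ' : Zfun β lam (flipJ B J) = Real.cosh t * S0 - Real.sinh t * S1 := by
    unfold Zfun
    rw [hS0, hS1, Finset.mul_sum, Finset.mul_sum, ← Finset.sum_sub_distrib]
    refine Finset.sum_congr rfl fun σ _ => ?_
    rw [energy_decomp β lam (flipJ B J) B σ, hflip0, hflipB, Real.exp_add]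
    have : β * lam B * -J B * sigmaA B σ = (-t) * sigmaA B σ := by rw [ht]; ring
    rw [this, exp_pm (-t) (sigmaA B σ) (sigmaA_pm B σ), Real.cosh_neg, Real.sinh_neg]
    ring
  have hN' : (∑ σ : V → Bool, sigmaA B σ * Real.exp (energy β lam (flipJ B J) σ))
      = Real.cosh t * S1 - Real.sinh t * S0 := by
    rw [hS0, hS1, Finset.mul_sum, Finset.mul_sum, ← Finset.sum_sub_distrib]
    refine Finset.sum_congr rfl fun σ _ => ?_
    rw [energy_decomp β lam (flipJ B J) B σ, hflip0, hflipB, Real.exp_add]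
    have : β * lam B * -J B * sigmaA B σ = (-t) * sigmaA B σ := by rw [ht]; ring
    rw [this, exp_pm (-t) (sigmaA B σ) (sigmaA_pm B σ), Real.cosh_neg, Real.sinh_neg]
    rcases sigmaA_pm B σ with h | h <;> rw [h] <;> ring
  have hkey : |Real.sinh t * S1| < Real.cosh t * S0 := by
    rw [abs_mul]
    calc |Real.sinh t| * |S1| ≤ |Real.sinh t| * S0 :=
          mul_le_mul_of_nonneg_left (abs_le.2 hS1le) (abs_nonneg _)
      _ < Real.cosh t * S0 := mul_lt_mul_of_pos_right habs hS0pos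
  have hkey' := abs_lt.1 hkey
  have hd1 : 0 < Real.cosh t * S0 + Real.sinh t * S1 := by linarith [hkey'.1, hkey'.2]
  have hd2 : 0 < Real.cosh t * S0 - Real.sinh t * S1 := by linarith [hkey'.1, hkey'.2]
  have hts : 0 ≤ J B * Real.sinh t := by
    rcases le_or_gt 0 (J B) with h | h
    · have : 0 ≤ t := by rw [ht]; positivity
      exact mul_nonneg h (by rwa [← Real.sinh_nonneg_iff] at this)
    · have h1 : t ≤ 0 := by
        rw [ht]; exact mul_nonpos_of_nonneg_of_nonpos (by positivity) h.le
      have : Real.sinh t ≤ 0 := by rwa [← Real.sinh_nonpos_iff] at h1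
      nlinarith [mul_nonneg (neg_nonneg.2 h.le) (neg_nonneg.2 this)]
  rw [corr, corr, hZ, hN, hZ', hN', hflipB]
  have htB : β * lam B * -J B = -t := by rw [ht]; ring
  rw [htB, Real.tanh_neg, Real.tanh_eq_sinh_div_cosh]
  exact alg_ineq (J B) (Real.cosh t) (Real.sinh t) S0 S1 hcpos hsq hd1 hd2 hts

end Aux

/-- Kitatani-type upper bound (Eq. (12)). -/
theorem kitatani_upper_bound [Fintype V] [DecidableEq V]
    (β : ℝ) (hβ : 0 < β) (lam : Finset V → ℝ)
    (P : Finset V → Measure ℝ) [∀ A, IsProbabilityMeasure (P A)]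
    (B : Finset V) (hlamB : 0 < lam B)
    (hPB : (P B).map (fun x => -x) = P B)
    (hint1 : Integrable (fun J => J B * corr β lam J B) (Measure.pi P))
    (hint2 : Integrable (fun J => J B * Real.tanh (β * lam B * J B)) (Measure.pi P)) :
    ∫ J, J B * corr β lam J B ∂(Measure.pi P) ≤
      ∫ J, J B * Real.tanh (β * lam B * J B) ∂(Measure.pi P) := by
  set μ := Measure.pi P with hμ
  set g : (Finset V → ℝ) → ℝ :=
    fun J => J B * corr β lam J B - J B * Real.tanh (β * lam B * J B) with hg
  have hmp : MeasurePreserving (flipJ B) μ μ := by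
    have h := measurePreserving_pi P P
      (f := fun A => if A = B then (fun x : ℝ => -x) else id) (fun A => by
        rcases eq_or_ne A B with hAB | hAB
        · subst hAB; simp only [if_pos rfl]
          exact ⟨measurable_neg, hPB⟩
        · simp only [if_neg hAB]
          exact MeasurePreserving.id _)
    have hfe : (fun (a : Finset V → ℝ) A =>
        (if A = B then (fun x : ℝ => -x) else id) (a A)) = flipJ B := by
      funext J A
      rcases eq_or_ne A B with hAB | hAB
      · subst hAB; simp [flipJ]
      · simp [flipJ, hAB, Function.update_of_ne hAB]
    rwa [hfe] at h
  have hintg : Integrable g μ := hint1.sub hint2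
  have hintg' : Integrable (fun J => g (flipJ B J)) μ :=
    (hmp.integrable_comp hintg.aestronglyMeasurable).2 hintg
  have hIeq : ∫ J, g (flipJ B J) ∂μ = ∫ J, g J ∂μ := by
    conv_rhs => rw [← hmp.map_eq]
    rw [integral_map hmp.measurable.aemeasurable]
    rw [hmp.map_eq]
    exact hintg.aestronglyMeasurable
  have hle : ∫ J, (g J + g (flipJ B J)) ∂μ ≤ 0 :=
    integral_nonpos fun J => key_pointwise β hβ lam B hlamB J
  rw [integral_add hintg hintg', hIeq] at hle
  have hgle : ∫ J, g J ∂μ ≤ 0 := by linarith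
  rw [hg] at hgle
  rw [integral_sub hint1 hint2] at hgle
  linarith
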